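/- Let q be a power of a prime p, let L be a field that is an F_q-algebra, let n ≥ 1 be an integer, and let α ∈ L be such that α^{q^n} + c ≠ 0 for every c ∈ F_q (this also forces α + c ≠ 0 for every c ∈ F_q). Then ∑_{c ∈ F_q} (c + α)^{1 − q^n} = (α^{q^n} − α) / ∏_{c ∈ F_q} (c + α^{q^n}). -/

import Mathlib

open Polynomial Finset


/-- **Lemma 5.3(1), algebraic identity.**  Let `q` be a power of a prime (realized as the
cardinality of a finite field `Fq`), `L` a field which is an `Fq`-algebra, `n ≥ 1`, and
`α ∈ L` with `α^{q^n} + c ≠ 0` for all `c ∈ Fq`.  Then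
`∑_{c ∈ Fq} (c + α)^{1 - q^n} = (α^{q^n} - α) / ∏_{c ∈ Fq} (c + α^{q^n})`. -/
theorem stmt0 (Fq L : Type*) [Field Fq] [Fintype Fq] [Field L] [Algebra Fq L]
    (q : ℕ) (hq : q = Fintype.card Fq)
    (n : ℕ) (hn : 1 ≤ n) (α : L)
    (hα : ∀ c : Fq, α ^ q ^ n + algebraMap Fq L c ≠ 0) :
    ∑ c : Fq, (algebraMap Fq L c + α) ^ (1 - (q : ℤ) ^ n) =
      (α ^ q ^ n - α) / ∏ c : Fq, (algebraMap Fq L c + α ^ q ^ n) := by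
  classical
  set f : Fq →+* L := algebraMap Fq L with hf
  have hinj : Function.Injective f := f.injective
  set p : ℕ := ringChar Fq with hp
  haveI hpf : Fact p.Prime := ⟨CharP.char_is_prime Fq p⟩
  haveI : CharP L p := charP_of_injective_algebraMap hinj p
  obtain ⟨k, -, hqk⟩ := FiniteField.card Fq p
  have hq' : q = p ^ (k : ℕ) := hq.trans hqk
  have hqn : q ^ n = p ^ ((k : ℕ) * n) := by rw [hq', ← pow_mul]
  set β : L := α ^ q ^ n with hβ
  -- recast goal with `α - f c` and `β - f c` via negation equivalence
  have hsum_eq : ∑ c : Fq, (f c + α) ^ (1 - (q : ℤ) ^ n)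
      = ∑ c : Fq, (α - f c) ^ (1 - (q : ℤ) ^ n) :=
    Fintype.sum_equiv (Equiv.neg Fq) _ _ (fun c => by
      simp [sub_eq_add_neg, add_comm])
  have hprod_eq : ∏ c : Fq, (f c + β) = ∏ c : Fq, (β - f c) :=
    Fintype.prod_equiv (Equiv.neg Fq) _ _ (fun c => by
      simp [sub_eq_add_neg, add_comm])
  have hβc : ∀ c : Fq, β - f c ≠ 0 := fun c => by
    simpa [sub_eq_add_neg] using hα (-c)
  have hcL : (q : L) = 0 := by
    rw [hq']; push_cast
    rw [CharP.cast_eq_zero L p]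
    exact zero_pow (by positivity)
  have hfc : ∀ c : Fq, f c ^ q ^ n = f c := fun c => by
    rw [← map_pow, hq, FiniteField.pow_card_pow]
  have hαc : ∀ c : Fq, α - f c ≠ 0 := by
    intro c h
    apply hβc c
    have : (α - f c) ^ q ^ n = β - f c := by
      rw [hqn, sub_pow_char_pow, ← hqn, hfc, hβ, hqn]
    rw [← this, h, zero_pow (by rw [hqn]; exact pow_ne_zero _ hpf.out.pos.ne')]
  -- the polynomial identity over Fq
  have hmonic : (X ^ q - X : Fq[X]).Monic := by
    apply monic_X_pow_sub
    rw [degree_X]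
    exact_mod_cast hq ▸ Fintype.one_lt_card
  have hroots : (X ^ q - X : Fq[X]).roots = Finset.univ.val := by
    rw [hq]; exact FiniteField.roots_X_pow_card_sub_X Fq
  have hdeg : (X ^ q - X : Fq[X]).natDegree = q :=
    FiniteField.X_pow_card_sub_X_natDegree_eq Fq (hq ▸ Fintype.one_lt_card)
  have hPFq : ∏ c : Fq, (X - C c : Fq[X]) = X ^ q - X := by
    have h := Polynomial.prod_multiset_X_sub_C_of_monic_of_roots_card_eq hmonic
      (by rw [hroots, hdeg, hq]; rfl)
    rw [hroots] at h
    exact h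
  have hPL : ∏ c : Fq, (X - C (f c) : L[X]) = X ^ q - X := by
    have := congrArg (Polynomial.map (f : Fq →+* L)) hPFq
    simpa [Polynomial.map_prod, Polynomial.map_sub, Polynomial.map_pow] using this
  have hprodval : ∏ c : Fq, (β - f c) = β ^ q - β := by
    have := congrArg (Polynomial.eval β) hPL
    simpa [Polynomial.eval_prod] using this
  have hPne : ∏ c : Fq, (β - f c) ≠ 0 := Finset.prod_ne_zero_iff.2 fun c _ => hβc c
  -- derivative computation
  have hder : ∑ c : Fq, ∏ d ∈ Finset.univ.erase c, (β - f d) = -1 := by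
    have h1 : derivative (∏ c : Fq, (X - C (f c) : L[X]))
        = ∑ c : Fq, ∏ d ∈ Finset.univ.erase c, (X - C (f d) : L[X]) := by
      rw [Finset.prod_eq_multiset_prod, Polynomial.derivative_prod,
        Finset.sum_eq_multiset_sum]
      congr 1
      apply Multiset.map_congr rfl
      intro c hc
      rw [Finset.prod_eq_multiset_prod, Finset.erase_val]
      simp
    have h2 : derivative (∏ c : Fq, (X - C (f c) : L[X])) = C (-1 : L) := by
      rw [hPL, derivative_sub, derivative_X_pow, derivative_X, hcL]
      simp
    have := congrArg (Polynomial.eval β) (h1.symm.trans h2)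
    simpa [Polynomial.eval_finset_sum, Polynomial.eval_prod] using this
  -- sum of inverses
  have hsuminv : ∑ c : Fq, (β - f c)⁻¹ = -(∏ c : Fq, (β - f c))⁻¹ := by
    have key : (∑ c : Fq, (β - f c)⁻¹) * ∏ c : Fq, (β - f c) = -1 := by
      rw [Finset.sum_mul]
      rw [← hder]
      apply Finset.sum_congr rfl
      intro c _
      rw [← Finset.mul_prod_erase Finset.univ _ (Finset.mem_univ c), ← mul_assoc,
        inv_mul_cancel₀ (hβc c), one_mul]
    field_simp at key ⊢
    linear_combination key
  -- rewrite each summand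
  have hterm : ∀ c : Fq, (α - f c) ^ (1 - (q : ℤ) ^ n)
      = 1 + (α - β) * (β - f c)⁻¹ := by
    intro c
    have hpow : (α - f c) ^ q ^ n = β - f c := by
      rw [hqn, sub_pow_char_pow, ← hqn, hfc, hβ, hqn]
    have : ((q : ℤ) ^ n) = ((q ^ n : ℕ) : ℤ) := by push_cast; ring
    rw [this, zpow_sub₀ (hαc c), zpow_one, zpow_natCast, hpow,
      div_eq_iff (hβc c), add_mul, one_mul, mul_assoc, inv_mul_cancel₀ (hβc c), mul_one]
    ring
  rw [hsum_eq]
  simp only [hterm]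
  rw [Finset.sum_add_distrib, Finset.sum_const, ← Finset.mul_sum, hsuminv,
    Finset.card_univ, ← hq, nsmul_eq_mul, mul_one, hcL, zero_add, hprod_eq,
    eq_div_iff hPne]
  field_simp
  ring
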